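/- If X is a k-complete Hausdorff topological semilattice, then X is s-complete: every non-empty subsemilattice S ⊆ X has inf S, and inf S belongs to the closure of ↑S. -/

import Mathlib

/-- The upper set generated by `A`. -/
def upSet {X : Type*} [Preorder X] (A : Set X) : Set X := {z : X | ∃ a ∈ A, a ≤ z}

/-- The lower set generated by `A`. -/
def downSet {X : Type*} [Preorder X] (A : Set X) : Set X := {z : X | ∃ a ∈ A, z ≤ a}

/-- `X` is k-complete if every non-empty chain has an inf and a sup, both in
the closure of the chain. -/
def KComplete (X : Type*) [TopologicalSpace X] [SemilatticeInf X] : Prop :=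
  ∀ C : Set X, IsChain (· ≤ ·) C → C.Nonempty →
    (∃ a : X, IsGLB C a ∧ a ∈ closure C) ∧ (∃ b : X, IsLUB C b ∧ b ∈ closure C)

/-- `X` is s-complete if every non-empty subsemilattice `S` has
`inf S ∈ cl(↑S)` and every non-empty chain `C` has `sup C ∈ cl(↓C)`. -/
def SComplete (X : Type*) [TopologicalSpace X] [SemilatticeInf X] : Prop :=
  (∀ S : Set X, S.Nonempty → (∀ a ∈ S, ∀ b ∈ S, a ⊓ b ∈ S) →
    ∃ a : X, IsGLB S a ∧ a ∈ closure (upSet S)) ∧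
  (∀ C : Set X, IsChain (· ≤ ·) C → C.Nonempty →
    ∃ b : X, IsLUB C b ∧ b ∈ closure (downSet C))

/-- Every k-complete Hausdorff topological semilattice is s-complete. -/
theorem sComplete_of_kComplete {X : Type*} [TopologicalSpace X] [T2Space X]
    [SemilatticeInf X]
    (hcont : Continuous fun p : X × X => p.1 ⊓ p.2)
    (hk : KComplete X) :
    SComplete X := by
  constructor
  · intro S hSne hSsub
    -- Work with the closure of S, which is a closed subsemilattice.
    set T := closure S with hT
    have hTclosed : IsClosed T := isClosed_closure
    -- T is a subsemilattice
    have hTsub : ∀ a ∈ T, ∀ b ∈ T, a ⊓ b ∈ T := by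
      intro a ha b hb
      have hmem : (a, b) ∈ closure (S ×ˢ S) := by
        rw [closure_prod_eq]; exact ⟨ha, hb⟩
      have h1 : a ⊓ b ∈ (fun p : X × X => p.1 ⊓ p.2) '' closure (S ×ˢ S) :=
        Set.mem_image_of_mem _ hmem
      have h2 := image_closure_subset_closure_image hcont h1
      refine closure_mono ?_ h2
      rintro z ⟨⟨x, y⟩, ⟨hx, hy⟩, rfl⟩
      exact hSsub x hx y hy
    obtain ⟨s₀, hs₀⟩ := hSne
    have hs₀T : s₀ ∈ T := subset_closure hs₀
    -- Take a maximal chain in T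
    obtain ⟨C, hCs₀, hCmax⟩ := zorn_subset_nonempty
      {C : Set X | C ⊆ T ∧ IsChain (· ≤ ·) C}
      (fun c hcsub hcchain _hcne => by
        refine ⟨⋃₀ c, ⟨?_, ?_⟩, fun s hs => Set.subset_sUnion_of_mem hs⟩
        · exact Set.sUnion_subset fun A hA => (hcsub hA).1
        · intro x hx y hy hxy
          obtain ⟨A, hA, hxA⟩ := hx
          obtain ⟨B, hB, hyB⟩ := hy
          rcases hcchain.total hA hB with h | h
          · exact (hcsub hB).2 (h hxA) hyB hxy
          · exact (hcsub hA).2 hxA (h hyB) hxy)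
      {s₀} ⟨Set.singleton_subset_iff.2 hs₀T, Set.Subsingleton.isChain (Set.subsingleton_singleton)⟩
    obtain ⟨hCT, hCchain⟩ := hCmax.prop
    have hCne : C.Nonempty := ⟨s₀, hCs₀ rfl⟩
    obtain ⟨⟨a, haglb, hacl⟩, -⟩ := hk C hCchain hCne
    have haT : a ∈ T := hTclosed.closure_subset_iff.2 hCT hacl
    -- a is a lower bound for T
    have halb : ∀ s ∈ T, a ≤ s := by
      intro s hsT
      set D := (fun c => c ⊓ s) '' C with hD
      have hDchain : IsChain (· ≤ ·) D :=
        hCchain.image_of_map_rel _ _ _ (fun x y hxy => inf_le_inf_right s hxy)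
      have hDne : D.Nonempty := hCne.image _
      obtain ⟨⟨d, hdglb, hdcl⟩, -⟩ := hk D hDchain hDne
      have hDT : D ⊆ T := by
        rintro z ⟨c, hc, rfl⟩
        exact hTsub c (hCT hc) s hsT
      have hdT : d ∈ T := hTclosed.closure_subset_iff.2 hDT hdcl
      -- d is below every element of C
      have hdC : ∀ c ∈ C, d ≤ c := fun c hc =>
        le_trans (hdglb.1 (Set.mem_image_of_mem _ hc)) inf_le_left
      -- so C ∪ {d} is a chain in T, hence d ∈ C by maximality
      have hdmem : d ∈ C := by
        have hins : insert d C ∈ {C : Set X | C ⊆ T ∧ IsChain (· ≤ ·) C} := by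
          refine ⟨Set.insert_subset hdT hCT, ?_⟩
          intro x hx y hy hxy
          rcases hx with rfl | hx
          · rcases hy with rfl | hy
            · exact absurd rfl hxy
            · exact Or.inl (hdC y hy)
          · rcases hy with rfl | hy
            · exact Or.inr (hdC x hx)
            · exact hCchain hx hy hxy
        have := hCmax.eq_of_subset hins (Set.subset_insert d C)
        rw [this]
        exact Set.mem_insert d C
      obtain ⟨c₀, hc₀⟩ := hCne
      have hds : d ≤ s :=
        le_trans (hdglb.1 (Set.mem_image_of_mem _ hc₀)) inf_le_right
      exact le_trans (haglb.1 hdmem) hds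
    refine ⟨a, ⟨?_, ?_⟩, ?_⟩
    · exact fun s hs => halb s (subset_closure hs)
    · -- any lower bound of S is a lower bound of T = closure S
      intro b hb
      have : T ⊆ {x | b ≤ x} := by
        apply closure_minimal
        · exact fun s hs => hb hs
        · have : {x | b ≤ x} = {x : X | b ⊓ x = b} := by
            ext x; simp [inf_eq_left]
          rw [this]
          exact isClosed_eq (hcont.comp (Continuous.prodMk_right b)) continuous_const
      exact this haT
    · refine closure_mono ?_ haT
      intro s hs
      exact ⟨s, hs, le_refl s⟩
  · intro C hCchain hCne
    obtain ⟨-, b, hb2, hbcl⟩ := hk C hCchain hCne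
    have hsub : C ⊆ downSet C := fun c hc => ⟨c, hc, le_refl c⟩
    exact ⟨b, hb2, closure_mono hsub hbcl⟩
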